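/- Let (x,y) be a gluing pair, i.e., x = 1 1 0 u 0 v and y = 1 0 1 u 0 v for Dyck words u, v. If x, viewed as a rooted tree, has a centroid in its right subtree v, then this vertex is also a centroid of y and φ(y) = φ(x) − 1. Symmetrically, if y has a centroid in its left subtree u, then this vertex is also a centroid of x and φ(y) = φ(x) + 1. -/

import Mathlib

/-- Rooted (ordered) plane trees: a root with a list of child subtrees. -/
inductive RTree where
  | node : List RTree → RTree

namespace RTree

mutual
/-- Number of edges of a rooted tree. -/
def edges : RTree → ℕ
  | .node cs => edgesF cs
/-- Number of edges of a forest, counting also the edges to the roots. -/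
def edgesF : List RTree → ℕ
  | [] => 0
  | c :: cs => edges c + 1 + edgesF cs
end

/-- Tree rotation `ρ(1 u 0 v) = u 1 v 0`: the leftmost child of the root becomes the new
root, and the old root (with its remaining children) is appended as its last child. -/
def rho : RTree → RTree
  | .node [] => .node []
  | .node (.node cs :: rest) => .node (cs ++ [.node rest])

mutual
/-- The list of vertices of a rooted tree, encoded as addresses (paths of child indices). -/
def addrs : RTree → List (List ℕ)
  | .node cs => [] :: addrsF 0 cs
def addrsF : ℕ → List RTree → List (List ℕ)
  | _, [] => []
  | i, c :: cs => (addrs c).map (i :: ·) ++ addrsF (i + 1) cs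
end

/-- Length of the longest common prefix of two addresses. -/
def lcp : List ℕ → List ℕ → ℕ
  | a :: p, b :: q => if a = b then 1 + lcp p q else 0
  | _, _ => 0

/-- Graph distance between two vertices, given by their addresses. -/
def adist (p q : List ℕ) : ℕ := p.length + q.length - 2 * lcp p q

/-- The potential of the vertex `p`: the sum of distances to all vertices of `t`. -/
def potential (t : RTree) (p : List ℕ) : ℕ := ((addrs t).map (adist p)).sum

/-- The potential `φ(t)` of the tree: the minimum vertex potential. -/
noncomputable def phiMin (t : RTree) : ℕ := sInf {m | ∃ p ∈ addrs t, potential t p = m}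

/-- A centroid: a vertex of minimum potential. -/
def IsCentroid (t : RTree) (p : List ℕ) : Prop :=
  p ∈ addrs t ∧ potential t p = phiMin t

/-- `λ(t)`: the rotation period of the rooted tree `t`, i.e. the number of distinct rooted
trees obtained from `t` by repeated rotation. -/
noncomputable def lam (t : RTree) : ℕ := sInf {i | 0 < i ∧ rho^[i] t = t}

end RTree

namespace RTree

/-- Shift the first index of an address by `i`. -/
def shiftBy (i : ℕ) : List ℕ → List ℕ
  | [] => []
  | k :: r => (k + i) :: r

lemma shiftBy_length (i : ℕ) (p : List ℕ) : (shiftBy i p).length = p.length := by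
  cases p <;> rfl

lemma lcp_cons_cons (a b : ℕ) (p q : List ℕ) :
    lcp (a :: p) (b :: q) = if a = b then 1 + lcp p q else 0 := rfl

lemma lcp_nil_left (p : List ℕ) : lcp [] p = 0 := by cases p <;> rfl

lemma lcp_nil_right (p : List ℕ) : lcp p [] = 0 := by cases p <;> rfl

lemma lcp_le_left : ∀ p q : List ℕ, lcp p q ≤ p.length ∧ lcp p q ≤ q.length := by
  intro p
  induction p with
  | nil => intro q; simp [lcp_nil_left]
  | cons a p ih =>
    intro q
    cases q with
    | nil => simp [lcp_nil_right]
    | cons b q =>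
      have := ih q
      rw [lcp_cons_cons]
      split <;> simp <;> omega

lemma adist_nil_right (p : List ℕ) : adist p [] = p.length := by
  simp [adist, lcp_nil_right]

lemma adist_nil_left (p : List ℕ) : adist [] p = p.length := by
  simp [adist, lcp_nil_left]

lemma adist_cons_ne {a b : ℕ} (p q : List ℕ) (h : a ≠ b) :
    adist (a :: p) (b :: q) = p.length + q.length + 2 := by
  simp [adist, lcp_cons_cons, h]
  omega

lemma adist_cons_eq (a : ℕ) (p q : List ℕ) :
    adist (a :: p) (a :: q) = adist p q := by
  have h1 := lcp_le_left p q
  simp [adist, lcp_cons_cons]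
  omega

lemma adist_shift (i a b : ℕ) (p q : List ℕ) :
    adist ((a + i) :: p) ((b + i) :: q) = adist (a :: p) (b :: q) := by
  rcases eq_or_ne a b with rfl | h
  · rw [adist_cons_eq, adist_cons_eq]
  · rw [adist_cons_ne p q (by omega), adist_cons_ne p q h]


lemma shiftBy_shiftBy (i j : ℕ) (p : List ℕ) :
    shiftBy i (shiftBy j p) = shiftBy (i + j) p := by
  cases p with
  | nil => rfl
  | cons k r => simp [shiftBy]; omega

lemma addrsF_shift (cs : List RTree) : ∀ i, addrsF i cs = (addrsF 0 cs).map (shiftBy i) := by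
  induction cs with
  | nil => intro i; rfl
  | cons c cs ih =>
    intro i
    show (addrs c).map (i :: ·) ++ addrsF (i + 1) cs = _
    rw [ih (i + 1)]
    show _ = ((addrs c).map (0 :: ·) ++ addrsF 1 cs).map (shiftBy i)
    rw [ih 1, List.map_append, List.map_map, List.map_map]
    congr 1
    · apply List.map_congr_left
      intro p _
      show i :: p = shiftBy i (0 :: p)
      simp [shiftBy]
    · apply List.map_congr_left
      intro p _
      show shiftBy (i + 1) p = shiftBy i (shiftBy 1 p)
      rw [shiftBy_shiftBy]

lemma addrsF_mem_form (cs : List RTree) : ∀ i p, p ∈ addrsF i cs → ∃ k r, p = k :: r := by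
  induction cs with
  | nil => intro i p h; simp [addrsF] at h
  | cons c cs ih =>
    intro i p h
    rw [show addrsF i (c :: cs) = (addrs c).map (i :: ·) ++ addrsF (i + 1) cs from rfl] at h
    rw [List.mem_append] at h
    rcases h with h | h
    · obtain ⟨q, _, rfl⟩ := List.mem_map.mp h
      exact ⟨i, q, rfl⟩
    · exact ih _ _ h

lemma addrs_x (U V : List RTree) :
    addrs (node (node (node [] :: U) :: V)) =
      [] :: [0] :: [0, 0] :: ((addrsF 0 U).map (fun a => 0 :: shiftBy 1 a)
        ++ (addrsF 0 V).map (shiftBy 1)) := by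
  show [] :: addrsF 0 (node (node [] :: U) :: V) = _
  rw [show addrsF 0 (node (node [] :: U) :: V)
      = (addrs (node (node [] :: U))).map (0 :: ·) ++ addrsF 1 V from rfl]
  rw [show addrs (node (node [] :: U)) = [] :: addrsF 0 (node [] :: U) from rfl]
  rw [show addrsF 0 (node [] :: U) = ([([] : List ℕ)]).map (0 :: ·) ++ addrsF 1 U from rfl]
  rw [addrsF_shift U 1, addrsF_shift V 1]
  simp [List.map_map, Function.comp]

lemma addrs_y (U V : List RTree) :
    addrs (node (node [] :: node U :: V)) =
      [] :: [0] :: [1] :: ((addrsF 0 U).map (fun a => 1 :: a)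
        ++ (addrsF 0 V).map (shiftBy 2)) := by
  show [] :: addrsF 0 (node [] :: node U :: V) = _
  rw [show addrsF 0 (node [] :: node U :: V)
      = ([([] : List ℕ)]).map (0 :: ·) ++ addrsF 1 (node U :: V) from rfl]
  rw [show addrsF 1 (node U :: V) = (addrs (node U)).map (1 :: ·) ++ addrsF 2 V from rfl]
  rw [show addrs (node U) = [] :: addrsF 0 U from rfl]
  rw [addrsF_shift V 2]
  simp [List.map_map, Function.comp]

lemma potential_x (U V : List RTree) (p : List ℕ) :
    potential (node (node (node [] :: U) :: V)) p =
      adist p [] + adist p [0] + adist p [0, 0]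
      + ((addrsF 0 U).map (fun a => adist p (0 :: shiftBy 1 a))).sum
      + ((addrsF 0 V).map (fun b => adist p (shiftBy 1 b))).sum := by
  rw [potential, addrs_x]
  simp [List.map_append, List.sum_append, List.map_map, Function.comp_def]
  ring

lemma potential_y (U V : List RTree) (p : List ℕ) :
    potential (node (node [] :: node U :: V)) p =
      adist p [] + adist p [0] + adist p [1]
      + ((addrsF 0 U).map (fun a => adist p (1 :: a))).sum
      + ((addrsF 0 V).map (fun b => adist p (shiftBy 2 b))).sum := by
  rw [potential, addrs_y]
  simp [List.map_append, List.sum_append, List.map_map, Function.comp_def]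
  ring


/-- potential of the root: `φ_y(root) + 1 = φ_x(root)`. -/
lemma E1 (U V : List RTree) :
    potential (node (node [] :: node U :: V)) [] + 1 =
      potential (node (node (node [] :: U) :: V)) [] := by
  rw [potential_x, potential_y]
  have hA : (fun a => adist [] (1 :: a)) = (fun a => adist ([] : List ℕ) (0 :: shiftBy 1 a)) := by
    funext a
    rw [adist_nil_left, adist_nil_left]
    simp [shiftBy_length]
  have hB : (fun b => adist [] (shiftBy 2 b)) = (fun b => adist ([] : List ℕ) (shiftBy 1 b)) := by
    funext b
    rw [adist_nil_left, adist_nil_left, shiftBy_length, shiftBy_length]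
  rw [hA, hB]
  simp [adist_nil_left]
  omega


/-- `φ_y(b) = φ_x(a) + 1` where `a = [0]` in `x`, `b = [1]` in `y`. -/
lemma E2 (U V : List RTree) :
    potential (node (node [] :: node U :: V)) [1] =
      potential (node (node (node [] :: U) :: V)) [0] + 1 := by
  rw [potential_x, potential_y]
  have hA : (fun a => adist [1] (1 :: a)) = (fun a => adist [0] (0 :: shiftBy 1 a)) := by
    funext a
    rw [show ([1] : List ℕ) = 1 :: [] from rfl, adist_cons_eq,
        show ([0] : List ℕ) = 0 :: [] from rfl, adist_cons_eq,
        adist_nil_left, adist_nil_left, shiftBy_length]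
  have hB : (fun b => adist [1] (shiftBy 2 b)) = (fun b => adist [0] (shiftBy 1 b)) := by
    funext b
    cases b with
    | nil => rfl
    | cons k r =>
      show adist [1] ((k + 2) :: r) = adist [0] ((k + 1) :: r)
      rw [adist_cons_ne _ _ (by omega), adist_cons_ne _ _ (by omega)]
  rw [hA, hB]
  rw [show adist [1] [] = 1 from rfl, show adist [1] [0] = 2 from rfl,
      show adist [1] [1] = 0 from rfl, show adist [0] [] = 1 from rfl,
      show adist [0] [0] = 0 from rfl, show adist [0] [0, 0] = 1 from rfl]
  omega

/-- potentials of corresponding vertices in the left subtree `u`. -/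
lemma E3 (U V : List RTree) (k : ℕ) (r : List ℕ) :
    potential (node (node [] :: node U :: V)) (1 :: k :: r) =
      potential (node (node (node [] :: U) :: V)) (0 :: (k + 1) :: r) + 1 := by
  rw [potential_x, potential_y]
  have hA : (fun a => adist (1 :: k :: r) (1 :: a))
      = (fun a => adist (0 :: (k + 1) :: r) (0 :: shiftBy 1 a)) := by
    funext a
    rw [adist_cons_eq, adist_cons_eq]
    cases a with
    | nil => show adist (k :: r) [] = adist ((k + 1) :: r) []
             rw [adist_nil_right, adist_nil_right]; rfl
    | cons k' r' => exact (adist_shift 1 k k' r r').symm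
  have hB : (fun b => adist (1 :: k :: r) (shiftBy 2 b))
      = (fun b => adist (0 :: (k + 1) :: r) (shiftBy 1 b)) := by
    funext b
    cases b with
    | nil => show adist _ [] = adist _ []
             rw [adist_nil_right, adist_nil_right]; rfl
    | cons j s =>
      show adist (1 :: k :: r) ((j + 2) :: s) = adist (0 :: (k + 1) :: r) ((j + 1) :: s)
      rw [adist_cons_ne _ _ (by omega), adist_cons_ne _ _ (by omega)]
      simp
  rw [hA, hB]
  rw [adist_nil_right, adist_nil_right,
      show ([0] : List ℕ) = 0 :: [] from rfl, show ([1] : List ℕ) = 1 :: [] from rfl,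
      adist_cons_ne _ _ (by omega : (1:ℕ) ≠ 0), adist_cons_eq, adist_cons_eq,
      show ([0, 0] : List ℕ) = 0 :: 0 :: [] from rfl, adist_cons_eq,
      adist_nil_right, adist_nil_right,
      adist_cons_ne _ _ (by omega : k + 1 ≠ 0)]
  simp
  omega

/-- potentials of corresponding vertices in the right subtree `v`. -/
lemma E4 (U V : List RTree) (j : ℕ) (s : List ℕ) :
    potential (node (node [] :: node U :: V)) ((j + 2) :: s) + 1 =
      potential (node (node (node [] :: U) :: V)) ((j + 1) :: s) := by
  rw [potential_x, potential_y]
  have hA : (fun a => adist ((j + 2) :: s) (1 :: a))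
      = (fun a => adist ((j + 1) :: s) (0 :: shiftBy 1 a)) := by
    funext a
    cases a with
    | nil =>
      show adist ((j + 2) :: s) [1] = adist ((j + 1) :: s) [0]
      rw [show ([0] : List ℕ) = 0 :: [] from rfl, show ([1] : List ℕ) = 1 :: [] from rfl,
          adist_cons_ne _ _ (by omega), adist_cons_ne _ _ (by omega)]
    | cons k r =>
      show adist ((j + 2) :: s) (1 :: k :: r) = adist ((j + 1) :: s) (0 :: (k + 1) :: r)
      rw [adist_cons_ne _ _ (by omega), adist_cons_ne _ _ (by omega)]
      simp
  have hB : (fun b => adist ((j + 2) :: s) (shiftBy 2 b))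
      = (fun b => adist ((j + 1) :: s) (shiftBy 1 b)) := by
    funext b
    cases b with
    | nil => show adist _ [] = adist _ []
             rw [adist_nil_right, adist_nil_right]; rfl
    | cons k r =>
      show adist ((j + 2) :: s) ((k + 2) :: r) = adist ((j + 1) :: s) ((k + 1) :: r)
      rw [adist_shift 2 j k s r, adist_shift 1 j k s r]
  rw [hA, hB]
  rw [adist_nil_right, adist_nil_right,
      show ([0] : List ℕ) = 0 :: [] from rfl, show ([1] : List ℕ) = 1 :: [] from rfl,
      adist_cons_ne _ _ (by omega : j + 2 ≠ 0), adist_cons_ne _ _ (by omega : j + 2 ≠ 1),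
      adist_cons_ne _ _ (by omega : j + 1 ≠ 0),
      show ([0, 0] : List ℕ) = 0 :: 0 :: [] from rfl,
      adist_cons_ne _ _ (by omega : j + 1 ≠ 0)]
  simp
  omega

/-- In `x`, the leaf `[0,0]` has potential at least that of its neighbour `[0]`. -/
lemma L1 (U V : List RTree) :
    potential (node (node (node [] :: U) :: V)) [0] ≤
      potential (node (node (node [] :: U) :: V)) [0, 0] := by
  rw [potential_x, potential_x]
  have hA : ((addrsF 0 U).map (fun a => adist [0] (0 :: shiftBy 1 a))).sum ≤
      ((addrsF 0 U).map (fun a => adist [0, 0] (0 :: shiftBy 1 a))).sum := by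
    apply List.sum_le_sum
    intro a _
    rw [show ([0] : List ℕ) = 0 :: [] from rfl, adist_cons_eq,
        show ([0, 0] : List ℕ) = 0 :: 0 :: [] from rfl, adist_cons_eq, adist_nil_left]
    cases a with
    | nil => simp [shiftBy, adist]
    | cons k r =>
      show (((k + 1) :: r : List ℕ)).length ≤ adist [0] ((k + 1) :: r)
      rw [adist_cons_ne _ _ (by omega : (0:ℕ) ≠ k + 1)]
      simp
  have hB : ((addrsF 0 V).map (fun b => adist [0] (shiftBy 1 b))).sum ≤
      ((addrsF 0 V).map (fun b => adist [0, 0] (shiftBy 1 b))).sum := by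
    apply List.sum_le_sum
    intro b _
    cases b with
    | nil => show adist [0] [] ≤ adist [0, 0] []
             rw [adist_nil_right, adist_nil_right]; simp
    | cons k r =>
      show adist [0] ((k + 1) :: r) ≤ adist [0, 0] ((k + 1) :: r)
      rw [show ([0] : List ℕ) = 0 :: [] from rfl,
          show ([0, 0] : List ℕ) = 0 :: 0 :: [] from rfl,
          adist_cons_ne _ _ (by omega : (0:ℕ) ≠ k + 1),
          adist_cons_ne _ _ (by omega : (0:ℕ) ≠ k + 1)]
      simp
  rw [show adist [0] [] = 1 from rfl, show adist [0] [0] = 0 from rfl,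
      show adist [0] [0, 0] = 1 from rfl, show adist [0, 0] [] = 2 from rfl,
      show adist [0, 0] [0] = 1 from rfl, show adist [0, 0] [0, 0] = 0 from rfl]
  omega

/-- In `y`, the leaf `[0]` has potential at least that of the root. -/
lemma L2 (U V : List RTree) :
    potential (node (node [] :: node U :: V)) [] ≤
      potential (node (node [] :: node U :: V)) [0] := by
  rw [potential_y, potential_y]
  have hA : ((addrsF 0 U).map (fun a => adist [] (1 :: a))).sum ≤
      ((addrsF 0 U).map (fun a => adist [0] (1 :: a))).sum := by
    apply List.sum_le_sum
    intro a _
    rw [adist_nil_left, show ([0] : List ℕ) = 0 :: [] from rfl,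
        adist_cons_ne _ _ (by omega : (0:ℕ) ≠ 1)]
    simp
  have hB : ((addrsF 0 V).map (fun b => adist [] (shiftBy 2 b))).sum ≤
      ((addrsF 0 V).map (fun b => adist [0] (shiftBy 2 b))).sum := by
    apply List.sum_le_sum
    intro b _
    cases b with
    | nil => show adist [] [] ≤ adist [0] []
             rw [adist_nil_right, adist_nil_right]; simp
    | cons k r =>
      show adist [] ((k + 2) :: r) ≤ adist [0] ((k + 2) :: r)
      rw [adist_nil_left, show ([0] : List ℕ) = 0 :: [] from rfl,
          adist_cons_ne _ _ (by omega : (0:ℕ) ≠ k + 2)]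
      simp
  rw [show adist [] [] = 0 from rfl, show adist [] [0] = 1 from rfl,
      show adist [] [1] = 1 from rfl, show adist [0] [] = 1 from rfl,
      show adist [0] [0] = 0 from rfl, show adist [0] [1] = 2 from rfl]
  omega

lemma mem_addrs_nil (t : RTree) : ([] : List ℕ) ∈ addrs t := by
  cases t with
  | node cs => show _ ∈ [] :: addrsF 0 cs; exact List.mem_cons_self

lemma phiMin_le (t : RTree) (p : List ℕ) (h : p ∈ addrs t) : phiMin t ≤ potential t p :=
  Nat.sInf_le ⟨p, h, rfl⟩

lemma exists_phiMin (t : RTree) : ∃ p ∈ addrs t, potential t p = phiMin t :=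
  Nat.sInf_mem (⟨potential t [], [], mem_addrs_nil t, rfl⟩ :
    {m | ∃ p ∈ addrs t, potential t p = m}.Nonempty)


end RTree

open RTree in
/-- Let `(x,y)` be a gluing pair: in tree form, for forests `U, V`
(encoding the Dyck words `u, v`), `x = 1 1 0 u 0 v` is the tree whose root has a leftmost
child `a` having a leaf as leftmost child and the forest `U` as remaining subtrees, and
whose remaining subtrees are the forest `V`; `y = 1 0 1 u 0 v` is obtained by pulling that
leaf to the root.  (We require `x` to have `n ≥ 4` edges and `(x,y) ≠ (s_n, s_n')`, i.e.
not both `V = []` and all trees of `U` single vertices.)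
If `x` has a centroid in its right subtree `v` (an address `(1+j) :: r`), then the
corresponding vertex `(2+j) :: r` is a centroid of `y` and `φ(y) = φ(x) − 1`.
Symmetrically, if `y` has a centroid in its left subtree `u` (an address `1 :: k :: r`),
then the corresponding vertex `0 :: (k+1) :: r` is a centroid of `x` and `φ(y) = φ(x)+1`. -/
theorem gluing_pair_potential (U V : List RTree)
    (hn : 4 ≤ (RTree.node (RTree.node (RTree.node [] :: U) :: V)).edges)
    (hsn : ¬ (V = [] ∧ ∀ c ∈ U, c = RTree.node [])) :
    (∀ j r, IsCentroid (RTree.node (RTree.node (RTree.node [] :: U) :: V)) ((1 + j) :: r) →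
      IsCentroid (RTree.node (RTree.node [] :: RTree.node U :: V)) ((2 + j) :: r) ∧
      phiMin (RTree.node (RTree.node [] :: RTree.node U :: V)) + 1 =
        phiMin (RTree.node (RTree.node (RTree.node [] :: U) :: V))) ∧
    (∀ k r, IsCentroid (RTree.node (RTree.node [] :: RTree.node U :: V)) (1 :: k :: r) →
      IsCentroid (RTree.node (RTree.node (RTree.node [] :: U) :: V)) (0 :: (k + 1) :: r) ∧
      phiMin (RTree.node (RTree.node [] :: RTree.node U :: V)) =
        phiMin (RTree.node (RTree.node (RTree.node [] :: U) :: V)) + 1) := by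
  clear hn hsn
  set X := RTree.node (RTree.node (RTree.node [] :: U) :: V) with hX
  set Y := RTree.node (RTree.node [] :: RTree.node U :: V) with hY
  -- For any centroid of Y, φ(X) ≤ φ(Y) + 1
  have key1 : phiMin X ≤ phiMin Y + 1 := by
    obtain ⟨q, hq, hq2⟩ := exists_phiMin Y
    rw [hY, addrs_y] at hq
    simp only [List.mem_cons, List.mem_append, List.mem_map] at hq
    rcases hq with rfl | rfl | rfl | ⟨a, ha, rfl⟩ | ⟨b, hb, rfl⟩
    · have h1 := E1 U V
      have h2 := phiMin_le X [] (mem_addrs_nil _)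
      rw [← hX, ← hY] at h1
      omega
    · have hL := L2 U V
      have h1 := E1 U V
      have h2 := phiMin_le X [] (mem_addrs_nil _)
      rw [← hX, ← hY] at h1
      rw [← hY] at hL
      omega
    · have h1 := E2 U V
      have h2 : phiMin X ≤ potential X [0] := by
        apply phiMin_le
        rw [hX, addrs_x]; simp
      rw [← hX, ← hY] at h1
      omega
    · obtain ⟨k, r, rfl⟩ := addrsF_mem_form U 0 a ha
      have h1 := E3 U V k r
      have h2 : phiMin X ≤ potential X (0 :: (k + 1) :: r) := by
        apply phiMin_le
        rw [hX, addrs_x]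
        simp only [List.mem_cons, List.mem_append, List.mem_map]
        exact Or.inr (Or.inr (Or.inr (Or.inl ⟨k :: r, ha, rfl⟩)))
      rw [← hX, ← hY] at h1
      omega
    · obtain ⟨k, s, rfl⟩ := addrsF_mem_form V 0 b hb
      simp only [shiftBy] at hq2
      have h1 := E4 U V k s
      have h2 : phiMin X ≤ potential X ((k + 1) :: s) := by
        apply phiMin_le
        rw [hX, addrs_x]
        simp only [List.mem_cons, List.mem_append, List.mem_map]
        exact Or.inr (Or.inr (Or.inr (Or.inr ⟨k :: s, hb, rfl⟩)))
      rw [← hX, ← hY] at h1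
      omega
  -- For any centroid of X, φ(Y) ≤ φ(X) + 1
  have key2 : phiMin Y ≤ phiMin X + 1 := by
    obtain ⟨q, hq, hq2⟩ := exists_phiMin X
    rw [hX, addrs_x] at hq
    simp only [List.mem_cons, List.mem_append, List.mem_map] at hq
    rcases hq with rfl | rfl | rfl | ⟨a, ha, rfl⟩ | ⟨b, hb, rfl⟩
    · have h1 := E1 U V
      have h2 := phiMin_le Y [] (mem_addrs_nil _)
      rw [← hX, ← hY] at h1
      omega
    · have h1 := E2 U V
      have h2 : phiMin Y ≤ potential Y [1] := by
        apply phiMin_le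
        rw [hY, addrs_y]; simp
      rw [← hX, ← hY] at h1
      omega
    · have hL := L1 U V
      rw [← hX] at hL
      have h1 := E2 U V
      have h2 : phiMin Y ≤ potential Y [1] := by
        apply phiMin_le
        rw [hY, addrs_y]; simp
      rw [← hX, ← hY] at h1
      omega
    · obtain ⟨k, r, rfl⟩ := addrsF_mem_form U 0 a ha
      simp only [shiftBy] at hq2
      have h1 := E3 U V k r
      have h2 : phiMin Y ≤ potential Y (1 :: k :: r) := by
        apply phiMin_le
        rw [hY, addrs_y]
        simp only [List.mem_cons, List.mem_append, List.mem_map]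
        exact Or.inr (Or.inr (Or.inr (Or.inl ⟨k :: r, ha, rfl⟩)))
      rw [← hX, ← hY] at h1
      omega
    · obtain ⟨k, s, rfl⟩ := addrsF_mem_form V 0 b hb
      simp only [shiftBy] at hq2
      have h1 := E4 U V k s
      have h2 : phiMin Y ≤ potential Y ((k + 2) :: s) := by
        apply phiMin_le
        rw [hY, addrs_y]
        simp only [List.mem_cons, List.mem_append, List.mem_map]
        exact Or.inr (Or.inr (Or.inr (Or.inr ⟨k :: s, hb, rfl⟩)))
      rw [← hX, ← hY] at h1
      omega
  constructor
  · rintro j r ⟨hmem, hpot⟩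
    rw [show 1 + j = j + 1 from by omega] at hmem hpot
    rw [show 2 + j = j + 2 from by omega]
    -- the centroid address lies in the V-part
    have hB : j :: r ∈ addrsF 0 V := by
      rw [hX, addrs_x] at hmem
      simp only [List.mem_cons, List.mem_append, List.mem_map] at hmem
      rcases hmem with h | h | h | ⟨a, ha, h⟩ | ⟨b, hb, h⟩
      · exact absurd h (by simp)
      · simp only [List.cons.injEq] at h; omega
      · simp only [List.cons.injEq] at h
        exact absurd h.1 (by omega)
      · simp only [List.cons.injEq] at h
        exact absurd h.1 (by omega)
      · cases b with
        | nil => exact absurd h (by simp [shiftBy])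
        | cons k s =>
          simp only [shiftBy, List.cons.injEq] at h
          obtain ⟨hk, rfl⟩ := h
          obtain rfl : k = j := by omega
          exact hb
    have hmemY : (j + 2) :: r ∈ addrs Y := by
      rw [hY, addrs_y]
      simp only [List.mem_cons, List.mem_append, List.mem_map]
      exact Or.inr (Or.inr (Or.inr (Or.inr ⟨j :: r, hB, rfl⟩)))
    have h1 := E4 U V j r
    rw [← hX, ← hY] at h1
    have h2 := phiMin_le Y _ hmemY
    exact ⟨⟨hmemY, by omega⟩, by omega⟩
  · rintro k r ⟨hmem, hpot⟩
    have hA : k :: r ∈ addrsF 0 U := by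
      rw [hY, addrs_y] at hmem
      simp only [List.mem_cons, List.mem_append, List.mem_map] at hmem
      rcases hmem with h | h | h | ⟨a, ha, h⟩ | ⟨b, hb, h⟩
      · exact absurd h (by simp)
      · exact absurd h (by simp)
      · exact absurd h (by simp)
      · obtain rfl : a = k :: r := by simpa using h
        exact ha
      · cases b with
        | nil => exact absurd h (by simp [shiftBy])
        | cons k' s =>
          simp only [shiftBy, List.cons.injEq] at h
          exact absurd h.1 (by omega)
    have hmemX : 0 :: (k + 1) :: r ∈ addrs X := by
      rw [hX, addrs_x]
      simp only [List.mem_cons, List.mem_append, List.mem_map]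
      exact Or.inr (Or.inr (Or.inr (Or.inl ⟨k :: r, hA, rfl⟩)))
    have h1 := E3 U V k r
    rw [← hX, ← hY] at h1
    have h2 := phiMin_le X _ hmemX
    exact ⟨⟨hmemX, by omega⟩, by omega⟩
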